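/- For all real numbers a, b > 0 with a ≠ b and all θ > 0, one has θ·(ab)^{θ/2}·|a−b| / |a^θ − b^θ| ≤ (a−b)/(log a − log b) ≤ θ·(a^θ + b^θ)·(a−b) / (2(a^θ − b^θ)). -/

import Mathlib

open Real

-- For 0 < y < x : 2xy(log x - log y) ≤ x² - y²   (geometric mean bound)
lemma core1 (y : ℝ) (hy : 0 < y) : ∀ x, y < x →
    2 * x * y * (Real.log x - Real.log y) ≤ x ^ 2 - y ^ 2 := by
  set f : ℝ → ℝ := fun x => x ^ 2 - y ^ 2 - 2 * x * y * (Real.log x - Real.log y) with hf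
  have key : MonotoneOn f (Set.Ici y) := by
    apply monotoneOn_of_deriv_nonneg (convex_Ici y)
    · apply ContinuousOn.sub
      · exact (continuous_pow 2).continuousOn.sub continuousOn_const
      · apply ContinuousOn.mul
        · exact ((continuous_const.mul continuous_id).mul continuous_const).continuousOn
        · apply ContinuousOn.sub _ continuousOn_const
          exact Real.continuousOn_log.mono (fun t ht => ne_of_gt (lt_of_lt_of_le hy ht))
    all_goals
      rw [interior_Ici]
      intro t ht
      have ht0 : 0 < t := hy.trans ht
      have h1 : HasDerivAt (fun x : ℝ => x ^ 2) (2 * t) t := by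
        simpa using hasDerivAt_pow 2 t
      have h3 : HasDerivAt (fun x => Real.log x - Real.log y) t⁻¹ t :=
        (Real.hasDerivAt_log ht0.ne').sub_const _
      have h4 : HasDerivAt (fun x : ℝ => 2 * x * y) (2 * y) t := by
        simpa using ((hasDerivAt_id t).const_mul 2).mul_const y
      have h5 := h4.mul h3
      have h6 := (h1.sub_const (y ^ 2)).sub h5
    case hf' => exact h6.differentiableAt.differentiableWithinAt
    case hf'_nonneg =>
      rw [show deriv f t = _ from h6.deriv]
      have hlog : Real.log t - Real.log y ≤ t / y - 1 := by
        have := Real.log_le_sub_one_of_pos (show 0 < t / y by positivity)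
        rwa [Real.log_div ht0.ne' hy.ne'] at this
      have e1 : 2 * t * y * t⁻¹ = 2 * y := by field_simp
      have e2 : 2 * y * (t / y - 1) = 2 * t - 2 * y := by field_simp
      nlinarith [mul_le_mul_of_nonneg_left hlog (by positivity : (0:ℝ) ≤ 2 * y)]
  intro x hx
  have h := key (Set.self_mem_Ici) (Set.mem_Ici.mpr hx.le) hx.le
  simp only [hf, sub_self, mul_zero] at h
  linarith

-- For 0 < y < x : x² - y² ≤ (x² + y²)(log x - log y)   (arithmetic mean bound)
lemma core2 (y : ℝ) (hy : 0 < y) : ∀ x, y < x →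
    x ^ 2 - y ^ 2 ≤ (x ^ 2 + y ^ 2) * (Real.log x - Real.log y) := by
  set g : ℝ → ℝ := fun x => (x ^ 2 + y ^ 2) * (Real.log x - Real.log y) - (x ^ 2 - y ^ 2) with hg
  have key : MonotoneOn g (Set.Ici y) := by
    apply monotoneOn_of_deriv_nonneg (convex_Ici y)
    · apply ContinuousOn.sub
      · apply ContinuousOn.mul
        · exact ((continuous_pow 2).add continuous_const).continuousOn
        · apply ContinuousOn.sub _ continuousOn_const
          exact Real.continuousOn_log.mono (fun t ht => ne_of_gt (lt_of_lt_of_le hy ht))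
      · exact ((continuous_pow 2).sub continuous_const).continuousOn
    all_goals
      rw [interior_Ici]
      intro t ht
      have ht0 : 0 < t := hy.trans ht
      have h1 : HasDerivAt (fun x : ℝ => x ^ 2 + y ^ 2) (2 * t) t := by
        simpa using (hasDerivAt_pow 2 t).add_const (y ^ 2)
      have h3 : HasDerivAt (fun x => Real.log x - Real.log y) t⁻¹ t :=
        (Real.hasDerivAt_log ht0.ne').sub_const _
      have h5 := h1.mul h3
      have h2 : HasDerivAt (fun x : ℝ => x ^ 2 - y ^ 2) (2 * t) t := by
        simpa using (hasDerivAt_pow 2 t).sub_const (y ^ 2)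
      have h6 := h5.sub h2
    case hf' => exact h6.differentiableAt.differentiableWithinAt
    case hf'_nonneg =>
      rw [show deriv g t = _ from h6.deriv]
      have hlog : 1 - y / t ≤ Real.log t - Real.log y := by
        have := Real.log_le_sub_one_of_pos (show 0 < y / t by positivity)
        rw [Real.log_div hy.ne' ht0.ne'] at this
        linarith
      have e1 : (t ^ 2 + y ^ 2) * t⁻¹ = t + y ^ 2 / t := by field_simp
      have e2 : 2 * t * (1 - y / t) = 2 * t - 2 * y := by field_simp
      have e3 : 2 * y ≤ t + y ^ 2 / t := by
        rw [← sub_nonneg]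
        have : t + y ^ 2 / t - 2 * y = (t - y) ^ 2 / t := by field_simp; ring
        rw [this]; positivity
      nlinarith [mul_le_mul_of_nonneg_left hlog (by positivity : (0:ℝ) ≤ 2 * t)]
  intro x hx
  have h := key (Set.self_mem_Ici) (Set.mem_Ici.mpr hx.le) hx.le
  simp only [hg, sub_self, mul_zero] at h
  linarith

lemma main_bound (a b θ : ℝ) (ha : 0 < a) (hb : 0 < b) (hba : b < a) (hθ : 0 < θ) :
    θ * (a * b) ^ (θ / 2) * |a - b| / |a ^ θ - b ^ θ| ≤ (a - b) / (Real.log a - Real.log b) ∧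
    (a - b) / (Real.log a - Real.log b) ≤ θ * (a ^ θ + b ^ θ) * (a - b) / (2 * (a ^ θ - b ^ θ)) := by
  set x := a ^ (θ / 2) with hxdef
  set y := b ^ (θ / 2) with hydef
  have hx : 0 < x := Real.rpow_pos_of_pos ha _
  have hy : 0 < y := Real.rpow_pos_of_pos hb _
  have hyx : y < x := Real.rpow_lt_rpow hb.le hba (by positivity)
  have ha2 : a ^ θ = x ^ 2 := by
    rw [hxdef, ← Real.rpow_natCast (a ^ (θ / 2)) 2, ← Real.rpow_mul ha.le]
    norm_num
  have hb2 : b ^ θ = y ^ 2 := by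
    rw [hydef, ← Real.rpow_natCast (b ^ (θ / 2)) 2, ← Real.rpow_mul hb.le]
    norm_num
  have hxy : (a * b) ^ (θ / 2) = x * y := Real.mul_rpow ha.le hb.le
  have hL : Real.log a - Real.log b = 2 / θ * (Real.log x - Real.log y) := by
    rw [hxdef, hydef, Real.log_rpow ha, Real.log_rpow hb]
    field_simp
  have hlog : Real.log y < Real.log x := Real.log_lt_log hy hyx
  have hLpos : 0 < Real.log a - Real.log b := by
    rw [hL]; apply mul_pos (by positivity); linarith
  have hab : 0 < a - b := sub_pos.mpr hba
  have hpow : 0 < a ^ θ - b ^ θ := by rw [ha2, hb2]; nlinarith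
  have h1 := core1 y hy x hyx
  have h2 := core2 y hy x hyx
  constructor
  · rw [abs_of_pos hab, abs_of_pos hpow, ha2, hb2, hxy, hL,
      div_le_div_iff₀ (by nlinarith) (by apply mul_pos (by positivity); linarith)]
    have e : θ * (x * y) * (a - b) * (2 / θ * (Real.log x - Real.log y)) =
        (a - b) * (2 * x * y * (Real.log x - Real.log y)) := by
      field_simp
    rw [e]
    have := mul_le_mul_of_nonneg_left h1 hab.le
    linarith
  · rw [ha2, hb2, hL, div_le_div_iff₀ (by apply mul_pos (by positivity); linarith) (by nlinarith)]
    have e : θ * (x ^ 2 + y ^ 2) * (a - b) * (2 / θ * (Real.log x - Real.log y)) =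
        (a - b) * (2 * ((x ^ 2 + y ^ 2) * (Real.log x - Real.log y))) := by
      field_simp
    rw [e]
    have := mul_le_mul_of_nonneg_left h2 hab.le
    linarith

theorem log_mean_two_sided_bound (a b θ : ℝ) (ha : 0 < a) (hb : 0 < b) (hab : a ≠ b)
    (hθ : 0 < θ) :
    θ * (a * b) ^ (θ / 2) * |a - b| / |a ^ θ - b ^ θ| ≤ (a - b) / (Real.log a - Real.log b) ∧
    (a - b) / (Real.log a - Real.log b) ≤ θ * (a ^ θ + b ^ θ) * (a - b) / (2 * (a ^ θ - b ^ θ)) := by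
  rcases hab.lt_or_gt with h | h
  · obtain ⟨h1, h2⟩ := main_bound b a θ hb ha h hθ
    constructor
    · rw [abs_sub_comm a b, abs_sub_comm (a ^ θ) (b ^ θ), mul_comm a b,
        show a - b = -(b - a) by ring,
        show Real.log a - Real.log b = -(Real.log b - Real.log a) by ring, neg_div_neg_eq]
      exact h1
    · rw [show a - b = -(b - a) by ring,
        show Real.log a - Real.log b = -(Real.log b - Real.log a) by ring, neg_div_neg_eq,
        show θ * (a ^ θ + b ^ θ) * -(b - a) = -(θ * (b ^ θ + a ^ θ) * (b - a)) by ring,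
        show 2 * (a ^ θ - b ^ θ) = -(2 * (b ^ θ - a ^ θ)) by ring, neg_div_neg_eq]
      exact h2
  · exact main_bound a b θ ha hb h hθ
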